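/- For every positive integer n, ∑_{k=0}^{n-1} (4k+3)·g_k = 3n²·∑_{k=0}^{n-1} (n−1 choose k)²·C_k, where C_k is the k-th Catalan number. -/
import Mathlib


/-- `g n = ∑_{k=0}^n (n choose k)² (2k choose k)`. -/
def g (n : ℕ) : ℤ :=
  ∑ k ∈ Finset.range (n + 1), (n.choose k : ℤ) ^ 2 * ((2 * k).choose k : ℤ)

/-- Absorption in `ℤ`: `(k+1)·C(n,k+1) = (n-k)·C(n,k)`. -/
lemma choose_absorb (n k : ℕ) :
    ((k : ℤ) + 1) * (n.choose (k + 1) : ℤ) = ((n : ℤ) - k) * (n.choose k : ℤ) := by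
  rcases le_or_gt (k + 1) n with h | h
  · have hcast : ((n.choose (k + 1) * (k + 1) : ℕ) : ℤ) = ((n.choose k * (n - k) : ℕ) : ℤ) := by
      rw [Nat.choose_succ_right_eq n k]
    push_cast [Nat.cast_sub (by omega : k ≤ n)] at hcast
    linarith
  · have h1 : n.choose (k + 1) = 0 := Nat.choose_eq_zero_of_lt h
    rcases le_or_gt k n with h2 | h2
    · have : k = n := by omega
      subst this
      simp [h1]
    · simp [h1, Nat.choose_eq_zero_of_lt h2]

/-- Central binomial recurrence in `ℤ`. -/
lemma central_rec (k : ℕ) :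
    ((k : ℤ) + 1) * ((2 * (k + 1)).choose (k + 1) : ℤ)
      = 2 * (2 * (k : ℤ) + 1) * ((2 * k).choose k : ℤ) := by
  have hcast : (((k + 1) * (k + 1).centralBinom : ℕ) : ℤ)
      = ((2 * (2 * k + 1) * k.centralBinom : ℕ) : ℤ) := by
    rw [Nat.succ_mul_centralBinom_succ k]
  simp only [Nat.centralBinom] at hcast
  push_cast at hcast
  linarith

/-- The per-`k` certificate identity. -/
lemma cert (n k : ℕ) :
    (2 * ((n : ℤ) + 1) - 3 * k) * ((n + 1).choose k : ℤ) ^ 2 * ((2 * k).choose k : ℤ)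
      - (2 * (n : ℤ) - 3 * k) * (n.choose k : ℤ) ^ 2 * ((2 * k).choose k : ℤ)
      = ((k : ℤ) + 1) * (n.choose k : ℤ) ^ 2 * ((2 * (k + 1)).choose (k + 1) : ℤ)
        - (k : ℤ) * (n.choose (k - 1) : ℤ) ^ 2 * ((2 * k).choose k : ℤ) := by
  cases k with
  | zero => simp [central_rec 0]; ring
  | succ j =>
      have hpas : ((n + 1).choose (j + 1) : ℤ) = (n.choose (j + 1) : ℤ) + (n.choose j : ℤ) := by
        rw [Nat.choose_succ_succ]
        push_cast
        ring
      have habs := choose_absorb n j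
      have hcen := central_rec (j + 1)
      simp only [Nat.succ_sub_one]
      rw [hpas]
      push_cast at hcen ⊢
      set A : ℤ := (n.choose (j + 1) : ℤ)
      set B : ℤ := (n.choose j : ℤ)
      set D : ℤ := ((2 * (j + 1)).choose (j + 1) : ℤ)
      linear_combination (-A ^ 2) * hcen + 2 * D * (-2 * A - B) * habs

/-- Telescoping certificate. -/
def Gt (n k : ℕ) : ℤ := (k : ℤ) * (n.choose (k - 1) : ℤ) ^ 2 * ((2 * k).choose k : ℤ)

/-- Key identity: `∑_{k=0}^n (2n-3k) C(n,k)² C(2k,k) = 0`. -/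
lemma key (n : ℕ) :
    ∑ k ∈ Finset.range (n + 1),
      (2 * (n : ℤ) - 3 * k) * (n.choose k : ℤ) ^ 2 * ((2 * k).choose k : ℤ) = 0 := by
  induction n with
  | zero => simp
  | succ n ih =>
      have hext : ∑ k ∈ Finset.range (n + 2),
          (2 * (n : ℤ) - 3 * k) * (n.choose k : ℤ) ^ 2 * ((2 * k).choose k : ℤ) = 0 := by
        rw [Finset.sum_range_succ, ih, Nat.choose_eq_zero_of_lt (by omega)]
        simp
      have htel : ∑ k ∈ Finset.range (n + 2),
          (((k : ℤ) + 1) * (n.choose k : ℤ) ^ 2 * ((2 * (k + 1)).choose (k + 1) : ℤ)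
            - (k : ℤ) * (n.choose (k - 1) : ℤ) ^ 2 * ((2 * k).choose k : ℤ)) = 0 := by
        have h2 : ∀ k ∈ Finset.range (n + 2),
            ((k : ℤ) + 1) * (n.choose k : ℤ) ^ 2 * ((2 * (k + 1)).choose (k + 1) : ℤ)
              - (k : ℤ) * (n.choose (k - 1) : ℤ) ^ 2 * ((2 * k).choose k : ℤ)
            = Gt n (k + 1) - Gt n k := by
          intro k _
          simp only [Gt, Nat.add_sub_cancel]
          push_cast
          ring
        rw [Finset.sum_congr rfl h2, Finset.sum_range_sub (Gt n) (n + 2)]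
        simp only [Gt]
        rw [show (n + 2) - 1 = n + 1 by omega, Nat.choose_eq_zero_of_lt (by omega)]
        simp
      calc ∑ k ∈ Finset.range (n + 1 + 1),
            (2 * (((n : ℕ) + 1 : ℕ) : ℤ) - 3 * (k : ℤ)) * (((n + 1).choose k : ℤ)) ^ 2
              * ((2 * k).choose k : ℤ)
          = ∑ k ∈ Finset.range (n + 2),
              ((2 * ((n : ℤ) + 1) - 3 * k) * ((n + 1).choose k : ℤ) ^ 2 * ((2 * k).choose k : ℤ)
                - (2 * (n : ℤ) - 3 * k) * (n.choose k : ℤ) ^ 2 * ((2 * k).choose k : ℤ))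
              + ∑ k ∈ Finset.range (n + 2),
                (2 * (n : ℤ) - 3 * k) * (n.choose k : ℤ) ^ 2 * ((2 * k).choose k : ℤ) := by
            rw [← Finset.sum_add_distrib]
            apply Finset.sum_congr rfl
            intro k _
            push_cast
            ring
        _ = 0 := by
            rw [hext, add_zero]
            rw [Finset.sum_congr rfl (fun k _ => cert n k)]
            exact htel

/-- `n·C(n-1,k) = (n-k)·C(n,k)` in `ℤ`, for `n ≥ 1`. -/
lemma choose_pred (n k : ℕ) (hn : 0 < n) :
    (n : ℤ) * ((n - 1).choose k : ℤ) = ((n : ℤ) - k) * (n.choose k : ℤ) := by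
  cases n with
  | zero => omega
  | succ m =>
      simp only [Nat.add_sub_cancel]
      have hcast : (((m + 1) * m.choose k : ℕ) : ℤ)
          = (((m + 1).choose (k + 1) * (k + 1) : ℕ) : ℤ) := by
        rw [Nat.add_one_mul_choose_eq m k]
      push_cast at hcast
      have habs := choose_absorb (m + 1) k
      push_cast at habs ⊢
      linarith

theorem sum_g_catalan (n : ℕ) (hn : 0 < n) :
    ∑ k ∈ Finset.range n, (4 * (k : ℤ) + 3) * g k
      = 3 * (n : ℤ) ^ 2 * ∑ k ∈ Finset.range n, ((n - 1).choose k : ℤ) ^ 2 * (catalan k : ℤ) := by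
  induction n with
  | zero => omega
  | succ m ih =>
      rcases Nat.eq_zero_or_pos m with hm | hm
      · subst hm
        simp [g, catalan]
      · -- inductive step
        have ihm := ih hm
        rw [Finset.sum_range_succ, ihm]
        simp only [Nat.add_sub_cancel]
        have hkey := key m
        have hS : ∑ k ∈ Finset.range m, ((m - 1).choose k : ℤ) ^ 2 * (catalan k : ℤ)
            = ∑ k ∈ Finset.range (m + 1), ((m - 1).choose k : ℤ) ^ 2 * (catalan k : ℤ) := by
          rw [Finset.sum_range_succ, Nat.choose_eq_zero_of_lt (by omega)]
          simp
        rw [hS]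
        have hper : ∀ k ∈ Finset.range (m + 1),
            3 * ((m : ℤ) + 1) ^ 2 * ((m.choose k : ℤ) ^ 2 * (catalan k : ℤ))
              - 3 * (m : ℤ) ^ 2 * (((m - 1).choose k : ℤ) ^ 2 * (catalan k : ℤ))
              - (4 * (m : ℤ) + 3) * ((m.choose k : ℤ) ^ 2 * ((2 * k).choose k : ℤ))
            = (2 * (m : ℤ) - 3 * k) * (m.choose k : ℤ) ^ 2 * ((2 * k).choose k : ℤ) := by
          intro k _
          have hcat : ((k : ℤ) + 1) * (catalan k : ℤ) = ((2 * k).choose k : ℤ) := by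
            have h1 : (((k + 1) * catalan k : ℕ) : ℤ) = (k.centralBinom : ℤ) := by
              rw [succ_mul_catalan_eq_centralBinom k]
            simp only [Nat.centralBinom] at h1
            push_cast at h1
            linarith
          have hc := choose_pred m k hm
          set b : ℤ := (m.choose k : ℤ)
          set c : ℤ := ((m - 1).choose k : ℤ)
          set t : ℤ := (catalan k : ℤ)
          linear_combination ((4 * (m : ℤ) + 3) * b ^ 2 + (2 * (m : ℤ) - 3 * k) * b ^ 2) * hcat
            - 3 * t * ((m : ℤ) * c + ((m : ℤ) - k) * b) * hc
        calc 3 * (m : ℤ) ^ 2 * ∑ k ∈ Finset.range (m + 1),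
              ((m - 1).choose k : ℤ) ^ 2 * (catalan k : ℤ)
              + (4 * (m : ℤ) + 3) * g m
            = 3 * ((m : ℤ) + 1) ^ 2 * ∑ k ∈ Finset.range (m + 1),
                (m.choose k : ℤ) ^ 2 * (catalan k : ℤ)
              - ∑ k ∈ Finset.range (m + 1),
                  (2 * (m : ℤ) - 3 * k) * (m.choose k : ℤ) ^ 2 * ((2 * k).choose k : ℤ) := by
              unfold g
              rw [← Finset.sum_congr rfl hper]
              rw [Finset.sum_sub_distrib, Finset.sum_sub_distrib]
              rw [← Finset.mul_sum, ← Finset.mul_sum, ← Finset.mul_sum]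
              ring
          _ = 3 * ((m : ℤ) + 1) ^ 2 * ∑ k ∈ Finset.range (m + 1),
                (m.choose k : ℤ) ^ 2 * (catalan k : ℤ) := by rw [hkey]; ring
          _ = 3 * (((m : ℕ) + 1 : ℕ) : ℤ) ^ 2 * ∑ k ∈ Finset.range (m + 1),
                (m.choose k : ℤ) ^ 2 * (catalan k : ℤ) := by push_cast; ring
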